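/- Let r ≥ 1. If n_1^{u−1} divides r_2, then cms_r(λK_{n_1,…,n_k}) = r·n_1. -/

import Mathlib

/-- A hypergraph: a finite vertex type, a finite edge (label) type and an incidence
relation; distinct (parallel) edges may be incident with the same vertices. -/
structure MHypergraph where
  V : Type
  E : Type
  fintV : Fintype V
  fintE : Fintype E
  inc : E → V → Bool

namespace MHypergraph

/-- The number ε of edges of `H`. -/
def edgeCard (H : MHypergraph) : ℕ :=
  letI := H.fintE
  Fintype.card H.E

/-- The degree of a vertex: the number of edges incident with it. -/
def degree (H : MHypergraph) (v : H.V) : ℕ :=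
  letI := H.fintE
  (Finset.univ.filter (fun e => H.inc e v = true)).card

/-- The maximum degree Δ(H). -/
def maxDegree (H : MHypergraph) : ℕ :=
  letI := H.fintV
  Finset.univ.sup H.degree

/-- An ordering (labelling) of `H`, encoded by its ε-periodic enumeration:
`f i` is the edge whose label is `i % ε`; on `[ε]`, `f` is a bijection onto the
edge set. -/
structure IsOrdering (H : MHypergraph) (f : ℕ → H.E) : Prop where
  periodic : ∀ i, f (i + H.edgeCard) = f i
  inj : ∀ i j, i < H.edgeCard → j < H.edgeCard → f i = f j → i = j
  surj : ∀ e : H.E, ∃ i, i < H.edgeCard ∧ f i = e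

/-- The degree of `v` in the hypergraph `H(S)` formed (with multiplicity) by the
sequence `S` of `s` (cyclically) consecutive edges with labels `j, …, j+s-1`
taken modulo ε. -/
def windowDeg (H : MHypergraph) (f : ℕ → H.E) (j s : ℕ) (v : H.V) : ℕ :=
  ((Finset.range s).filter (fun i => H.inc (f (j + i)) v = true)).card

/-- Every sequence of `s` consecutive edges of the ordering `f` forms a hypergraph of
maximum degree at most `r`.  A window of `s` consecutive edges starts at a label `j`
with `j + s ≤ (a+1)·ε`, where `a·ε ≤ s < (a+1)·ε` (i.e. `a = s / ε`). -/
def msOK (H : MHypergraph) (f : ℕ → H.E) (r s : ℕ) : Prop :=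
  ∀ j v, j + s ≤ (s / H.edgeCard + 1) * H.edgeCard → H.windowDeg f j s v ≤ r

/-- Every sequence of `s` cyclically consecutive edges of the ordering `f` forms a
hypergraph of maximum degree at most `r`. -/
def cmsOK (H : MHypergraph) (f : ℕ → H.E) (r s : ℕ) : Prop :=
  ∀ j v, H.windowDeg f j s v ≤ r

/-- ms_r(ℓ): the largest `s` such that every `s` consecutive edges of `ℓ` form a
hypergraph of maximum degree at most `r`. -/
noncomputable def msrOf (H : MHypergraph) (f : ℕ → H.E) (r : ℕ) : ℕ :=
  sSup {s | H.msOK f r s}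

/-- cms_r(ℓ). -/
noncomputable def cmsrOf (H : MHypergraph) (f : ℕ → H.E) (r : ℕ) : ℕ :=
  sSup {s | H.cmsOK f r s}

/-- ms_r(H): the maximum of ms_r(ℓ) over all orderings ℓ of H. -/
noncomputable def msr (H : MHypergraph) (r : ℕ) : ℕ :=
  sSup {s | ∃ f, H.IsOrdering f ∧ H.msOK f r s}

/-- cms_r(H): the maximum of cms_r(ℓ) over all orderings ℓ of H. -/
noncomputable def cmsr (H : MHypergraph) (r : ℕ) : ℕ :=
  sSup {s | ∃ f, H.IsOrdering f ∧ H.cmsOK f r s}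

end MHypergraph

/-- The complete multi-k-partite k-graph λ·K_{n 0, …, n (k-1)} with edge
multiplicity `lam`: the vertex set is the disjoint union of the parts
`N_i = Fin (n i)`, and for each choice of one vertex from each part there are
`lam` parallel edges incident with exactly those `k` vertices. -/
def lamK (k lam : ℕ) (n : Fin k → ℕ) : MHypergraph where
  V := Σ i : Fin k, Fin (n i)
  E := Fin lam × (∀ i : Fin k, Fin (n i))
  fintV := inferInstance
  fintE := inferInstance
  inc := fun e v => decide (e.2 v.1 = v.2)

private def npF (k : ℕ) (n : Fin k → ℕ) (t : ℕ) : ℕ := if h : t < k then n ⟨t, h⟩ else 1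

private def WF (k u : ℕ) (n : Fin k → ℕ) (i : ℕ) : ℕ := ∏ t ∈ Finset.Ico u i, npF k n t

private def xvalF (k u : ℕ) (n : Fin k → ℕ) (i p : ℕ) : ℕ :=
  if i < u then p / (npF k n 0) ^ i % (npF k n 0)
  else (p / (npF k n 0) ^ (u - 1) / ((npF k n 0) * WF k u n i) % npF k n i
        + (npF k n i - 1) * (p / (npF k n 0) ^ (u - 1) % npF k n 0)) % npF k n i

private def labF (k lam u : ℕ) (n : Fin k → ℕ) (p : ℕ) : ℕ :=
  p / (npF k n 0) ^ (u - 1) / (npF k n 0 * WF k u n k) % lam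

private lemma npF_pos (k : ℕ) (n : Fin k → ℕ) (hpos : ∀ i, 0 < n i) (t : ℕ) :
    0 < npF k n t := by
  unfold npF; split
  · exact hpos _
  · exact Nat.one_pos

private lemma npF_eq (k : ℕ) (n : Fin k → ℕ) (i : Fin k) : npF k n (i : ℕ) = n i := by
  unfold npF; rw [dif_pos i.isLt]

private lemma npF_zero (k : ℕ) (n : Fin k → ℕ) (h0 : 0 < k) : npF k n 0 = n ⟨0, h0⟩ := by
  unfold npF; rw [dif_pos h0]

private lemma npF_low (k u : ℕ) (n : Fin k → ℕ) (h0 : 0 < k) (huk : u ≤ k)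
    (heq : ∀ i : Fin k, (i : ℕ) < u → n i = n ⟨0, h0⟩) (t : ℕ) (ht : t < u) :
    npF k n t = n ⟨0, h0⟩ := by
  unfold npF; rw [dif_pos (by omega : t < k)]
  exact heq ⟨t, by omega⟩ ht

private lemma WF_pos (k u : ℕ) (n : Fin k → ℕ) (hpos : ∀ i, 0 < n i) (i : ℕ) :
    0 < WF k u n i := by
  unfold WF
  exact Finset.prod_pos (fun t _ => npF_pos k n hpos t)

private lemma WF_step (k u : ℕ) (n : Fin k → ℕ) (i : ℕ) (hi : u ≤ i) :
    WF k u n (i + 1) = WF k u n i * npF k n i := by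
  unfold WF
  exact Finset.prod_Ico_succ_top hi _

private lemma WF_dvd (k u : ℕ) (n : Fin k → ℕ) (i : ℕ) (hi : u ≤ i) (hik : i < k) :
    WF k u n i * npF k n i ∣ WF k u n k := by
  rw [← WF_step k u n i hi]
  unfold WF
  exact Finset.prod_dvd_prod_of_subset _ _ _ (Finset.Ico_subset_Ico le_rfl (by omega))

private lemma prod_univ_eq (k u : ℕ) (n : Fin k → ℕ) (h0 : 0 < k) (huk : u ≤ k)
    (heq : ∀ i : Fin k, (i : ℕ) < u → n i = n ⟨0, h0⟩) :
    ∏ i : Fin k, n i = (n ⟨0, h0⟩) ^ u * WF k u n k := by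
  have h1 : ∏ i : Fin k, n i = ∏ t ∈ Finset.range k, npF k n t := by
    rw [← Fin.prod_univ_eq_prod_range (npF k n) k]
    exact Finset.prod_congr rfl (fun i _ => (npF_eq k n i).symm)
  rw [h1, Finset.range_eq_Ico, ← Finset.prod_Ico_consecutive (npF k n) (Nat.zero_le u) huk]
  have h2 : ∏ t ∈ Finset.Ico 0 u, npF k n t = (n ⟨0, h0⟩) ^ u := by
    rw [Finset.prod_congr rfl (fun t ht => npF_low k u n h0 huk heq t (Finset.mem_Ico.mp ht).2)]
    rw [Finset.prod_const, Nat.card_Ico, Nat.sub_zero]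
  rw [h2]
  rfl

private def ordF (k lam u : ℕ) (n : Fin k → ℕ) (hlam : 0 < lam) (hpos : ∀ i, 0 < n i)
    (h0 : 0 < k) (huk : u ≤ k)
    (heq : ∀ i : Fin k, (i : ℕ) < u → n i = n ⟨0, h0⟩) (p : ℕ) :
    Fin lam × (∀ i : Fin k, Fin (n i)) :=
  (⟨labF k lam u n p, Nat.mod_lt _ hlam⟩,
   fun i => ⟨xvalF k u n (i : ℕ) p, by
     unfold xvalF
     split
     · next h =>
       rw [heq i h, ← npF_zero k n h0]
       exact Nat.mod_lt _ (npF_pos k n hpos 0)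
     · rw [← npF_eq k n i]
       exact Nat.mod_lt _ (npF_pos k n hpos _)⟩)

private lemma div_mod_period (p d m T : ℕ) (hd : 0 < d) (h : d * m ∣ T) :
    (p + T) / d % m = p / d % m := by
  obtain ⟨t, rfl⟩ := h
  rw [mul_assoc, Nat.add_mul_div_left _ _ hd, Nat.add_mul_mod_self_left]

private lemma count_split (P : ℕ → Prop) [DecidablePred P] (a b : ℕ) :
    ((Finset.range (a + b)).filter P).card
      = ((Finset.range a).filter P).card
        + ((Finset.range b).filter (fun i => P (a + i))).card := by
  classical
  rw [Finset.range_add, Finset.filter_union, Finset.card_union_of_disjoint, Finset.filter_map]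
  · rw [Finset.card_map]
    congr 1
  · refine Finset.disjoint_filter_filter ?_
    simp only [Finset.disjoint_left, Finset.mem_range, Finset.mem_map, addLeftEmbedding_apply]
    rintro x hx ⟨y, hy, rfl⟩
    omega

private lemma fiber_card_le (C' j0 : ℕ) (hC : 0 < C') (t : ℕ) (s : Finset ℕ)
    (hs : ∀ i ∈ s, (j0 + i) / C' = t) : s.card ≤ C' := by
  have : s.card ≤ (Finset.Ico (t * C') (t * C' + C')).card := by
    refine Finset.card_le_card_of_injOn (fun i => j0 + i) ?_ ?_
    · intro i hi
      have h1 := hs i hi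
      have h2 : t * C' ≤ j0 + i := by
        calc t * C' = (j0 + i) / C' * C' := by rw [h1]
        _ ≤ j0 + i := Nat.div_mul_le_self _ _
      have h3 : j0 + i < t * C' + C' := by
        have h4 : (j0 + i) / C' < t + 1 := by omega
        have h5 := (Nat.div_lt_iff_lt_mul hC).mp h4
        have h6 : (t + 1) * C' = t * C' + C' := by ring
        omega
      exact Finset.mem_Ico.mpr ⟨h2, h3⟩
    · intro x _ y _ h
      simp only at h
      omega
  simpa [Nat.card_Ico] using this

private lemma window_le (n0 C' : ℕ) (hC : 0 < C') (v : ℕ → ℕ) (a : ℕ)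
    (hspace : ∀ t m, 1 ≤ m → m < n0 → v (t + m) ≠ v t) (j0 : ℕ) :
    ((Finset.range (n0 * C')).filter (fun i => v ((j0 + i) / C') = a)).card ≤ C' := by
  classical
  set J := j0 / C' with hJ
  have hdam : C' * J + j0 % C' = j0 := Nat.div_add_mod j0 C'
  have hrho : j0 % C' < C' := Nat.mod_lt _ hC
  have hrange : ∀ i < n0 * C', J ≤ (j0 + i) / C' ∧ (j0 + i) / C' ≤ J + n0 := by
    intro i hi
    constructor
    · exact Nat.div_le_div_right (Nat.le_add_right _ _)
    · have h4 : (j0 + i) / C' < J + n0 + 1 := by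
        rw [Nat.div_lt_iff_lt_mul hC]
        have h5 : (J + n0 + 1) * C' = C' * J + n0 * C' + C' := by ring
        omega
      omega
  by_cases hmid : ∃ t, J < t ∧ t < J + n0 ∧ v t = a
  · obtain ⟨t0, ht1, ht2, ht3⟩ := hmid
    refine fiber_card_le C' j0 hC t0 _ ?_
    intro i hi
    simp only [Finset.mem_filter, Finset.mem_range] at hi
    obtain ⟨hi1, hi2⟩ := hi
    obtain ⟨hl, hu⟩ := hrange i hi1
    set t := (j0 + i) / C' with htdef
    by_contra hne
    rcases Nat.lt_or_ge t t0 with hlt | hge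
    · exact hspace t (t0 - t) (by omega) (by omega)
        (by rw [show t + (t0 - t) = t0 by omega, ht3, hi2])
    · have hlt2 : t0 < t := by omega
      exact hspace t0 (t - t0) (by omega) (by omega)
        (by rw [show t0 + (t - t0) = t by omega, ht3, hi2])
  · push_neg at hmid
    have hsub : (Finset.range (n0 * C')).filter (fun i => v ((j0 + i) / C') = a) ⊆
        ((Finset.range (n0 * C')).filter (fun i => (j0 + i) / C' = J)) ∪
        ((Finset.range (n0 * C')).filter (fun i => (j0 + i) / C' = J + n0)) := by
      intro i hi
      simp only [Finset.mem_filter, Finset.mem_range, Finset.mem_union] at hi ⊢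
      obtain ⟨hi1, hi2⟩ := hi
      obtain ⟨hl, hu⟩ := hrange i hi1
      rcases eq_or_lt_of_le hl with h | h
      · exact Or.inl ⟨hi1, h.symm⟩
      rcases eq_or_lt_of_le hu with h' | h'
      · exact Or.inr ⟨hi1, h'⟩
      · exact absurd hi2 (hmid _ h h')
    have h1 : ((Finset.range (n0 * C')).filter (fun i => (j0 + i) / C' = J)).card
        ≤ C' - j0 % C' := by
      have hss : (Finset.range (n0 * C')).filter (fun i => (j0 + i) / C' = J)
          ⊆ Finset.range (C' - j0 % C') := by
        intro i hi
        simp only [Finset.mem_filter, Finset.mem_range] at hi ⊢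
        obtain ⟨hi1, hi2⟩ := hi
        have h4 : (j0 + i) / C' < J + 1 := by omega
        have h5 := (Nat.div_lt_iff_lt_mul hC).mp h4
        have h6 : (J + 1) * C' = C' * J + C' := by ring
        omega
      simpa using Finset.card_le_card hss
    have h2 : ((Finset.range (n0 * C')).filter (fun i => (j0 + i) / C' = J + n0)).card
        ≤ j0 % C' := by
      have hss : (Finset.range (n0 * C')).filter (fun i => (j0 + i) / C' = J + n0)
          ⊆ Finset.Ico (n0 * C' - j0 % C') (n0 * C') := by
        intro i hi
        simp only [Finset.mem_filter, Finset.mem_range, Finset.mem_Ico] at hi ⊢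
        obtain ⟨hi1, hi2⟩ := hi
        have h3 : (J + n0) * C' ≤ j0 + i := by
          calc (J + n0) * C' = (j0 + i) / C' * C' := by rw [hi2]
          _ ≤ j0 + i := Nat.div_mul_le_self _ _
        have h6 : (J + n0) * C' = C' * J + n0 * C' := by ring
        omega
      have hcard := Finset.card_le_card hss
      rw [Nat.card_Ico] at hcard
      omega
    calc ((Finset.range (n0 * C')).filter (fun i => v ((j0 + i) / C') = a)).card
        ≤ _ := Finset.card_le_card hsub
      _ ≤ ((Finset.range (n0 * C')).filter (fun i => (j0 + i) / C' = J)).card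
          + ((Finset.range (n0 * C')).filter (fun i => (j0 + i) / C' = J + n0)).card :=
            Finset.card_union_le _ _
      _ ≤ (C' - j0 % C') + j0 % C' := Nat.add_le_add h1 h2
      _ ≤ C' := by omega

private lemma windows_le (n0 C' : ℕ) (hC : 0 < C') (v : ℕ → ℕ) (a : ℕ)
    (hspace : ∀ t m, 1 ≤ m → m < n0 → v (t + m) ≠ v t) :
    ∀ (R j0 : ℕ),
    ((Finset.range (R * (n0 * C'))).filter (fun i => v ((j0 + i) / C') = a)).card ≤ R * C' := by
  intro R
  induction R with
  | zero => simp
  | succ R ih =>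
    intro j0
    have hsplit : (R + 1) * (n0 * C') = (n0 * C') + R * (n0 * C') := by ring
    rw [hsplit, count_split]
    have h1 := window_le n0 C' hC v a hspace j0
    have h2 : ((Finset.range (R * (n0 * C'))).filter
        (fun i => v ((j0 + (n0 * C' + i)) / C') = a)).card ≤ R * C' := by
      have := ih (j0 + n0 * C')
      simpa [Nat.add_assoc] using this
    calc _ ≤ C' + R * C' := Nat.add_le_add h1 h2
      _ = (R + 1) * C' := by ring

private lemma spacing_low (n0 : ℕ) :
    ∀ t m, 1 ≤ m → m < n0 → (t + m) % n0 ≠ t % n0 := by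
  intro t m h1 h2 h
  have hd : n0 ∣ (t + m) - t := (Nat.modEq_iff_dvd' (Nat.le_add_right _ _)).mp h.symm
  rw [Nat.add_sub_cancel_left] at hd
  have := Nat.le_of_dvd (by omega) hd
  omega

private lemma spacing_high (n0 Wi ni : ℕ) (hni : n0 < ni) :
    ∀ t m, 1 ≤ m → m < n0 →
      (t + m) / (n0 * Wi) % ni + (ni - 1) * ((t + m) % n0)
        ≡ t / (n0 * Wi) % ni + (ni - 1) * (t % n0) [MOD ni] → False := by
  intro t m h1 h2 heqn
  have hn0 : 0 < n0 := by omega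
  have hni0 : 0 < ni := by omega
  haveI : NeZero ni := ⟨by omega⟩
  have hle1 : (1 : ℕ) ≤ ni := by omega
  have hc : (((t + m) / (n0 * Wi) % ni + (ni - 1) * ((t + m) % n0) : ℕ) : ZMod ni)
      = ((t / (n0 * Wi) % ni + (ni - 1) * (t % n0) : ℕ) : ZMod ni) := by
    rw [ZMod.natCast_eq_natCast_iff']
    exact heqn
  push_cast [ZMod.natCast_mod, Nat.cast_sub hle1] at hc
  rw [ZMod.natCast_self] at hc
  have hdd : t / (n0 * Wi) = t / n0 / Wi := by rw [Nat.div_div_eq_div_mul]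
  have hdd2 : (t + m) / (n0 * Wi) = (t + m) / n0 / Wi := by rw [Nat.div_div_eq_div_mul]
  have hmlt : (m : ZMod ni) ≠ 0 := by
    intro h
    have := (ZMod.natCast_eq_zero_iff m ni).mp h
    have := Nat.le_of_dvd (by omega) this
    omega
  have ht := Nat.div_add_mod t n0
  have hte : t % n0 < n0 := Nat.mod_lt _ hn0
  by_cases hem : t % n0 + m < n0
  · have htm : t + m = n0 * (t / n0) + (t % n0 + m) := by omega
    have hq : (t + m) / n0 = t / n0 := by
      rw [htm, Nat.mul_add_div hn0, Nat.div_eq_of_lt hem, Nat.add_zero]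
    have hr : (t + m) % n0 = t % n0 + m := by
      rw [htm, Nat.mul_add_mod, Nat.mod_eq_of_lt hem]
    rw [hdd, hdd2, hq, hr] at hc
    push_cast at hc
    apply hmlt
    linear_combination -hc
  · have hexp : n0 * (t / n0 + 1) = n0 * (t / n0) + n0 := by ring
    have htm : t + m = n0 * (t / n0 + 1) + (t % n0 + m - n0) := by omega
    have hlt2 : t % n0 + m - n0 < n0 := by omega
    have hq : (t + m) / n0 = t / n0 + 1 := by
      rw [htm, Nat.mul_add_div hn0, Nat.div_eq_of_lt hlt2, Nat.add_zero]
    have hr : (t + m) % n0 + n0 = t % n0 + m := by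
      rw [htm, Nat.mul_add_mod, Nat.mod_eq_of_lt hlt2]
      omega
    have hrc : ((t + m) % n0 : ZMod ni) + (n0 : ZMod ni)
        = (t % n0 : ZMod ni) + (m : ZMod ni) := by
      exact_mod_cast congrArg (Nat.cast : ℕ → ZMod ni) hr
    have hDup : (t / n0 + 1) / Wi = t / n0 / Wi ∨ (t / n0 + 1) / Wi = t / n0 / Wi + 1 := by
      rcases Nat.eq_zero_or_pos Wi with h | h
      · subst h; simp
      · have ha := Nat.div_le_div_right (c := Wi) (show t / n0 ≤ t / n0 + 1 by omega)
        have hb : (t / n0 + 1) / Wi ≤ t / n0 / Wi + 1 := by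
          have := Nat.div_le_div_right (c := Wi) (show t / n0 + 1 ≤ t / n0 + Wi by omega)
          rwa [Nat.add_div_right _ h] at this
        omega
    rw [hdd, hdd2, hq] at hc
    rcases hDup with hD | hD <;> rw [hD] at hc <;> push_cast at hc
    · have key : ((n0 : ℕ) : ZMod ni) = ((m : ℕ) : ZMod ni) := by
        linear_combination hrc + hc
      rw [ZMod.natCast_eq_natCast_iff'] at key
      rw [Nat.mod_eq_of_lt (by omega : n0 < ni), Nat.mod_eq_of_lt (by omega : m < ni)] at key
      omega
    · have key : ((n0 + 1 : ℕ) : ZMod ni) = ((m : ℕ) : ZMod ni) := by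
        push_cast
        linear_combination hrc + hc
      rw [ZMod.natCast_eq_natCast_iff'] at key
      rw [Nat.mod_eq_of_lt (by omega : m < ni)] at key
      rcases (by omega : n0 + 1 < ni ∨ n0 + 1 = ni) with h | h
      · rw [Nat.mod_eq_of_lt h] at key; omega
      · rw [h, Nat.mod_self] at key; omega

private def epsF (k lam u : ℕ) (n : Fin k → ℕ) : ℕ :=
  npF k n 0 ^ (u - 1) * (npF k n 0 * (WF k u n k * lam))

private lemma xvalF_low (k u : ℕ) (n : Fin k → ℕ) (i p : ℕ) (h : i < u) :
    xvalF k u n i p = p / (npF k n 0) ^ i % (npF k n 0) := by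
  unfold xvalF; rw [if_pos h]

private lemma xvalF_high (k u : ℕ) (n : Fin k → ℕ) (i p : ℕ) (h : ¬ i < u) :
    xvalF k u n i p
      = (p / (npF k n 0) ^ (u - 1) / ((npF k n 0) * WF k u n i) % npF k n i
        + (npF k n i - 1) * (p / (npF k n 0) ^ (u - 1) % npF k n 0)) % npF k n i := by
  unfold xvalF; rw [if_neg h]

private lemma add_mod_cancel_right' (a b c nn : ℕ)
    (h : (a % nn + c) % nn = (b % nn + c) % nn) : a % nn = b % nn := by
  have h2 : a % nn + c ≡ b % nn + c [MOD nn] := h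
  have h3 := Nat.ModEq.add_right_cancel' c h2
  have h4 : a % nn % nn = b % nn % nn := h3
  rwa [Nat.mod_mod_of_dvd _ dvd_rfl, Nat.mod_mod_of_dvd _ dvd_rfl] at h4

private lemma xvalF_per (k lam u : ℕ) (n : Fin k → ℕ) (hpos : ∀ i, 0 < n i)
    (hu1 : 1 ≤ u) (i : ℕ) (hik : i < k) (p : ℕ) :
    xvalF k u n i (p + epsF k lam u n) = xvalF k u n i p := by
  have hN0pos : 0 < npF k n 0 := npF_pos k n hpos 0
  unfold xvalF
  split
  · next h =>
    refine div_mod_period p _ _ _ (by positivity) ?_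
    refine ⟨npF k n 0 ^ (u - 1 - i) * (WF k u n k * lam), ?_⟩
    have hp : (npF k n 0) ^ (u - 1) = npF k n 0 ^ i * npF k n 0 ^ (u - 1 - i) := by
      rw [← pow_add]; congr 1; omega
    unfold epsF
    rw [hp]; ring
  · next h =>
    have hui : u ≤ i := by omega
    obtain ⟨D, hD⟩ := WF_dvd k u n i hui hik
    have e1 : (p + epsF k lam u n) / npF k n 0 ^ (u - 1) / (npF k n 0 * WF k u n i) % npF k n i
        = p / npF k n 0 ^ (u - 1) / (npF k n 0 * WF k u n i) % npF k n i := by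
      rw [Nat.div_div_eq_div_mul, Nat.div_div_eq_div_mul]
      refine div_mod_period p _ _ _ ?_ ?_
      · have := WF_pos k u n hpos i
        positivity
      · refine ⟨D * lam, ?_⟩
        unfold epsF
        rw [hD]; ring
    have e2 : (p + epsF k lam u n) / npF k n 0 ^ (u - 1) % npF k n 0
        = p / npF k n 0 ^ (u - 1) % npF k n 0 := by
      refine div_mod_period p _ _ _ (by positivity) ⟨WF k u n k * lam, by unfold epsF; ring⟩
    rw [e1, e2]

private lemma labF_per (k lam u : ℕ) (n : Fin k → ℕ) (hpos : ∀ i, 0 < n i) (p : ℕ) :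
    labF k lam u n (p + epsF k lam u n) = labF k lam u n p := by
  have hN0pos : 0 < npF k n 0 := npF_pos k n hpos 0
  have hWK : 0 < WF k u n k := WF_pos k u n hpos k
  unfold labF
  rw [Nat.div_div_eq_div_mul, Nat.div_div_eq_div_mul]
  refine div_mod_period p _ _ _ (by positivity) ⟨1, by unfold epsF; ring⟩

private lemma lamK_lower (k lam u : ℕ) (n : Fin k → ℕ) (hlam : 0 < lam) (h0 : 0 < k)
    (hu1 : 1 ≤ u) (huk : u ≤ k) (hpos : ∀ i, 0 < n i)
    (heq : ∀ i : Fin k, (i : ℕ) < u → n i = n ⟨0, h0⟩)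
    (hlt : ∀ i : Fin k, u ≤ (i : ℕ) → n ⟨0, h0⟩ < n i)
    (r : ℕ) (hdvd : (n ⟨0, h0⟩) ^ (u - 1) ∣ r) :
    ∃ f, (lamK k lam n).IsOrdering f ∧ (lamK k lam n).cmsOK f r (r * n ⟨0, h0⟩) := by
  classical
  have hN0 : npF k n 0 = n ⟨0, h0⟩ := npF_zero k n h0
  have hN0pos : 0 < npF k n 0 := npF_pos k n hpos 0
  have hWKpos : 0 < WF k u n k := WF_pos k u n hpos k
  have hBeq : (npF k n 0) ^ u = (npF k n 0) ^ (u - 1) * npF k n 0 := by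
    conv_lhs => rw [show u = (u - 1) + 1 by omega]
    rw [pow_succ]
  have hcard : (lamK k lam n).edgeCard = epsF k lam u n := by
    have h1 : (lamK k lam n).edgeCard = Fintype.card (Fin lam × ∀ i : Fin k, Fin (n i)) := by
      letI := (lamK k lam n).fintE
      unfold MHypergraph.edgeCard
      exact Fintype.card_congr (Equiv.refl _)
    rw [h1, Fintype.card_prod, Fintype.card_fin, Fintype.card_pi]
    simp only [Fintype.card_fin]
    rw [prod_univ_eq k u n h0 huk heq, ← hN0, hBeq]
    unfold epsF
    ring
  have hdvd' : npF k n 0 ^ (u - 1) ∣ r := by rw [hN0]; exact hdvd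
  obtain ⟨R, hR⟩ := hdvd'
  -- injectivity on [ε]
  have hinj : ∀ p q, p < epsF k lam u n → q < epsF k lam u n →
      ordF k lam u n hlam hpos h0 huk heq p = ordF k lam u n hlam hpos h0 huk heq q →
      p = q := by
    intro p q hp hq hf
    have hlab : labF k lam u n p = labF k lam u n q :=
      congrArg (fun z : Fin lam × (∀ i : Fin k, Fin (n i)) => (z.1 : ℕ)) hf
    have hxv : ∀ j, j < k → xvalF k u n j p = xvalF k u n j q := fun j hj =>
      congrArg (fun z : Fin lam × (∀ i : Fin k, Fin (n i)) => ((z.2 ⟨j, hj⟩ : Fin (n ⟨j, hj⟩)) : ℕ)) hf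
    have hxN : ∀ j, j < u → p / npF k n 0 ^ j % npF k n 0 = q / npF k n 0 ^ j % npF k n 0 := by
      intro j hj
      have h := hxv j (by omega)
      rwa [xvalF_low k u n j p hj, xvalF_low k u n j q hj] at h
    have hmodB : ∀ j, j ≤ u → p % npF k n 0 ^ j = q % npF k n 0 ^ j := by
      intro j
      induction j with
      | zero => intro _; rw [pow_zero, Nat.mod_one, Nat.mod_one]
      | succ j ih =>
        intro hj
        rw [pow_succ, Nat.mod_mul, Nat.mod_mul, ih (by omega), hxN j (by omega)]
    have he : p / npF k n 0 ^ (u - 1) % npF k n 0 = q / npF k n 0 ^ (u - 1) % npF k n 0 :=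
      hxN (u - 1) (by omega)
    have hT : ∀ j, u ≤ j → j < k →
        p / npF k n 0 ^ (u - 1) / (npF k n 0 * WF k u n j) % npF k n j
          = q / npF k n 0 ^ (u - 1) / (npF k n 0 * WF k u n j) % npF k n j := by
      intro j hj hjk
      have hx := hxv j hjk
      rw [xvalF_high k u n j p (by omega), xvalF_high k u n j q (by omega), he] at hx
      exact add_mod_cancel_right' _ _ _ _ hx
    have hchain : ∀ d, u + d ≤ k →
        p / npF k n 0 ^ (u - 1) / npF k n 0 % WF k u n (u + d)
          = q / npF k n 0 ^ (u - 1) / npF k n 0 % WF k u n (u + d) := by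
      intro d
      induction d with
      | zero =>
        intro _
        have h1 : WF k u n (u + 0) = 1 := by
          unfold WF
          simp
        rw [h1, Nat.mod_one, Nat.mod_one]
      | succ d ih =>
        intro hd
        rw [show u + (d + 1) = (u + d) + 1 from rfl, WF_step k u n (u + d) (by omega)]
        rw [Nat.mod_mul, Nat.mod_mul, ih (by omega)]
        have hdd : ∀ z : ℕ, z / npF k n 0 ^ (u - 1) / npF k n 0 / WF k u n (u + d)
            = z / npF k n 0 ^ (u - 1) / (npF k n 0 * WF k u n (u + d)) := by
          intro z; rw [Nat.div_div_eq_div_mul]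
        rw [hdd, hdd, hT (u + d) (by omega) (by omega)]
    have hPW : p / npF k n 0 ^ (u - 1) / npF k n 0 % WF k u n k
        = q / npF k n 0 ^ (u - 1) / npF k n 0 % WF k u n k := by
      have := hchain (k - u) (by omega)
      rwa [show u + (k - u) = k by omega] at this
    have hlab' : p / npF k n 0 ^ (u - 1) / npF k n 0 / WF k u n k % lam
        = q / npF k n 0 ^ (u - 1) / npF k n 0 / WF k u n k % lam := by
      have hdd : ∀ z : ℕ, z / npF k n 0 ^ (u - 1) / npF k n 0 / WF k u n k
          = z / npF k n 0 ^ (u - 1) / (npF k n 0 * WF k u n k) := by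
        intro z; rw [Nat.div_div_eq_div_mul]
      rw [hdd, hdd]
      exact hlab
    have hfull : p / npF k n 0 ^ (u - 1) / npF k n 0 % (WF k u n k * lam)
        = q / npF k n 0 ^ (u - 1) / npF k n 0 % (WF k u n k * lam) := by
      rw [Nat.mod_mul, Nat.mod_mul, hPW, hlab']
    have hplt : p / npF k n 0 ^ (u - 1) / npF k n 0 < WF k u n k * lam := by
      rw [Nat.div_div_eq_div_mul, Nat.div_lt_iff_lt_mul (by positivity)]
      calc p < epsF k lam u n := hp
        _ = WF k u n k * lam * (npF k n 0 ^ (u - 1) * npF k n 0) := by unfold epsF; ring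
    have hqlt : q / npF k n 0 ^ (u - 1) / npF k n 0 < WF k u n k * lam := by
      rw [Nat.div_div_eq_div_mul, Nat.div_lt_iff_lt_mul (by positivity)]
      calc q < epsF k lam u n := hq
        _ = WF k u n k * lam * (npF k n 0 ^ (u - 1) * npF k n 0) := by unfold epsF; ring
    have hPQ : p / npF k n 0 ^ (u - 1) / npF k n 0 = q / npF k n 0 ^ (u - 1) / npF k n 0 := by
      rw [← Nat.mod_eq_of_lt hplt, ← Nat.mod_eq_of_lt hqlt, hfull]
    have hmB : p % npF k n 0 ^ u = q % npF k n 0 ^ u := hmodB u le_rfl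
    have hdB : ∀ z : ℕ, z / npF k n 0 ^ u = z / npF k n 0 ^ (u - 1) / npF k n 0 := by
      intro z
      rw [Nat.div_div_eq_div_mul, ← hBeq]
    have hp1 := Nat.div_add_mod p (npF k n 0 ^ u)
    have hq1 := Nat.div_add_mod q (npF k n 0 ^ u)
    rw [hdB p, hPQ] at hp1
    rw [hdB q] at hq1
    omega
  refine ⟨fun p => ordF k lam u n hlam hpos h0 huk heq p, ⟨?_, ?_, ?_⟩, ?_⟩
  · -- periodic
    intro p
    rw [hcard]
    have h1 : labF k lam u n (p + epsF k lam u n) = labF k lam u n p := labF_per k lam u n hpos p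
    have h2 : ∀ i : Fin k, xvalF k u n (i : ℕ) (p + epsF k lam u n) = xvalF k u n (i : ℕ) p :=
      fun i => xvalF_per k lam u n hpos hu1 (i : ℕ) i.isLt p
    unfold ordF
    exact Prod.ext (Fin.ext h1) (funext fun i => Fin.ext (h2 i))
  · -- inj
    intro p q hp hq hf
    rw [hcard] at hp hq
    exact hinj p q hp hq hf
  · -- surj
    intro e
    have hbij : Function.Bijective (fun x : Fin (epsF k lam u n) =>
        ordF k lam u n hlam hpos h0 huk heq (x : ℕ)) := by
      rw [Fintype.bijective_iff_injective_and_card]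
      constructor
      · intro x y hxy
        exact Fin.ext (hinj _ _ x.isLt y.isLt hxy)
      · rw [Fintype.card_fin, Fintype.card_prod, Fintype.card_fin, Fintype.card_pi]
        simp only [Fintype.card_fin]
        rw [prod_univ_eq k u n h0 huk heq, ← hN0, hBeq]
        unfold epsF
        ring
    obtain ⟨x, hx⟩ := hbij.2 e
    exact ⟨(x : ℕ), by rw [hcard]; exact x.isLt, hx⟩
  · -- cmsOK
    rintro j0 ⟨iv, a⟩
    have hpred : ∀ i : ℕ, ((lamK k lam n).inc
        (ordF k lam u n hlam hpos h0 huk heq (j0 + i)) ⟨iv, a⟩ = true)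
          ↔ (xvalF k u n (iv : ℕ) (j0 + i) = (a : ℕ)) := by
      intro i
      rw [show (lamK k lam n).inc (ordF k lam u n hlam hpos h0 huk heq (j0 + i)) ⟨iv, a⟩
          = decide ((ordF k lam u n hlam hpos h0 huk heq (j0 + i)).2 iv = a) from rfl]
      rw [decide_eq_true_eq, Fin.ext_iff]
      exact Iff.rfl
    unfold MHypergraph.windowDeg
    rw [Finset.filter_congr (fun i _ => hpred i)]
    by_cases hiv : (iv : ℕ) < u
    · -- low coordinate
      have hxeq : ∀ i, xvalF k u n (iv : ℕ) (j0 + i) = (j0 + i) / npF k n 0 ^ (iv : ℕ) % npF k n 0 :=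
        fun i => xvalF_low k u n _ _ hiv
      rw [Finset.filter_congr (fun i _ => by rw [hxeq i])]
      have hps : npF k n 0 ^ (u - 1) = npF k n 0 ^ (u - 1 - (iv : ℕ)) * npF k n 0 ^ (iv : ℕ) := by
        rw [← pow_add]; congr 1; omega
      have hlen : r * n ⟨0, h0⟩
          = (R * npF k n 0 ^ (u - 1 - (iv : ℕ))) * (npF k n 0 * npF k n 0 ^ (iv : ℕ)) := by
        rw [← hN0, hR, hps]; ring
      rw [hlen]
      refine le_trans (windows_le (npF k n 0) (npF k n 0 ^ (iv : ℕ)) (by positivity)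
        (fun t => t % npF k n 0) (a : ℕ) (spacing_low (npF k n 0)) _ j0) ?_
      rw [hR, hps]; ring_nf; exact le_refl _
    · -- high coordinate
      have hnpiv : npF k n 0 < npF k n (iv : ℕ) := by
        rw [hN0, npF_eq k n iv]
        exact hlt iv (by omega)
      have hxeq : ∀ i, xvalF k u n (iv : ℕ) (j0 + i)
          = (fun t => (t / (npF k n 0 * WF k u n (iv : ℕ)) % npF k n (iv : ℕ)
              + (npF k n (iv : ℕ) - 1) * (t % npF k n 0)) % npF k n (iv : ℕ))
            ((j0 + i) / npF k n 0 ^ (u - 1)) :=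
        fun i => xvalF_high k u n _ _ hiv
      rw [Finset.filter_congr (fun i _ => by rw [hxeq i])]
      have hlen : r * n ⟨0, h0⟩ = R * (npF k n 0 * npF k n 0 ^ (u - 1)) := by
        rw [← hN0, hR]; ring
      rw [hlen]
      refine le_trans (windows_le (npF k n 0) (npF k n 0 ^ (u - 1)) (by positivity)
        (fun t => (t / (npF k n 0 * WF k u n (iv : ℕ)) % npF k n (iv : ℕ)
              + (npF k n (iv : ℕ) - 1) * (t % npF k n 0)) % npF k n (iv : ℕ))
        (a : ℕ) ?_ R j0) ?_
      · intro t m h1 h2 hcontra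
        exact spacing_high (npF k n 0) (WF k u n (iv : ℕ)) (npF k n (iv : ℕ)) hnpiv
          t m h1 h2 hcontra
      · rw [hR]; ring_nf; exact le_refl _

private lemma lamK_upper (k lam : ℕ) (n : Fin k → ℕ) (h0 : 0 < k)
    (r s : ℕ) (f : ℕ → (lamK k lam n).E) (hok : (lamK k lam n).cmsOK f r s) :
    s ≤ r * n ⟨0, h0⟩ := by
  classical
  by_contra hcon
  push_neg at hcon
  have hkey : (Finset.range s).card = ∑ a : Fin (n ⟨0, h0⟩),
      ((Finset.range s).filter (fun i => (f i).2 ⟨0, h0⟩ = a)).card :=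
    Finset.card_eq_sum_card_fiberwise (fun i _ => Finset.mem_univ _)
  have hle : ∀ a : Fin (n ⟨0, h0⟩),
      ((Finset.range s).filter (fun i => (f i).2 ⟨0, h0⟩ = a)).card ≤ r := by
    intro a
    have hw := hok 0 ⟨⟨0, h0⟩, a⟩
    unfold MHypergraph.windowDeg at hw
    have hEq : ∀ i ∈ Finset.range s, ((f i).2 ⟨0, h0⟩ = a)
        ↔ ((lamK k lam n).inc (f (0 + i)) ⟨⟨0, h0⟩, a⟩ = true) := by
      intro i _
      rw [show (lamK k lam n).inc (f (0 + i)) ⟨⟨0, h0⟩, a⟩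
          = decide ((f (0 + i)).2 ⟨0, h0⟩ = a) from rfl]
      rw [decide_eq_true_eq, Nat.zero_add]
    rw [Finset.filter_congr hEq]
    exact hw
  have hs : s ≤ n ⟨0, h0⟩ * r := by
    calc s = (Finset.range s).card := (Finset.card_range s).symm
      _ = ∑ a : Fin (n ⟨0, h0⟩),
          ((Finset.range s).filter (fun i => (f i).2 ⟨0, h0⟩ = a)).card := hkey
      _ ≤ ∑ _a : Fin (n ⟨0, h0⟩), r := Finset.sum_le_sum (fun a _ => hle a)
      _ = n ⟨0, h0⟩ * r := by
        rw [Finset.sum_const, Finset.card_univ, Fintype.card_fin, smul_eq_mul]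
  have : r * n ⟨0, h0⟩ = n ⟨0, h0⟩ * r := mul_comm _ _
  omega

/-- Lemma: if `n_1^(u-1) ∣ r_2` then `cms_r(λK_{n_1,…,n_k}) = r·n_1`. -/
theorem cms_eq_of_dvd
    (k lam u : ℕ) (n : Fin k → ℕ)
    (hk : 2 ≤ k) (hlam : 1 ≤ lam)
    (hu1 : 1 ≤ u) (huk : u ≤ k)
    (hpos : ∀ i, 1 ≤ n i)
    (hmono : ∀ i j : Fin k, i ≤ j → n i ≤ n j)
    (heq : ∀ i : Fin k, (i : ℕ) < u → n i = n ⟨0, by omega⟩)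
    (hlt : ∀ i : Fin k, u ≤ (i : ℕ) → n ⟨0, by omega⟩ < n i)
    (N N' : ℕ)
    (hN : N = ∏ i ∈ Finset.univ.filter (fun i : Fin k => (i : ℕ) ≠ 0), n i)
    (hN' : N' = ∏ i ∈ Finset.univ.filter (fun i : Fin k => u ≤ (i : ℕ)), n i)
    (r r1 r2 : ℕ) (hr : 1 ≤ r)
    (hrdec : r = r1 * (lam * N) + r2) (hr2 : r2 < lam * N)
    (hdvd : (n ⟨0, by omega⟩) ^ (u - 1) ∣ r2) :
    (lamK k lam n).cmsr r = r * n ⟨0, by omega⟩ := by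
    classical
  have h0 : 0 < k := by omega
  -- N = n0^(u-1) * WF k u n k, hence n0^(u-1) ∣ N
  have hNsplit : n ⟨0, h0⟩ * N = ∏ i : Fin k, n i := by
    rw [hN]
    have hfe : Finset.univ.filter (fun i : Fin k => (i : ℕ) ≠ 0)
        = Finset.univ.erase ⟨0, h0⟩ := by
      ext i
      simp only [Finset.mem_filter, Finset.mem_erase, Finset.mem_univ, true_and, and_true]
      constructor
      · intro h hi
        exact h (by rw [hi])
      · intro h hi
        exact h (Fin.ext hi)
    rw [hfe, Finset.mul_prod_erase Finset.univ n (Finset.mem_univ _)]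
  have hdvdN : (n ⟨0, h0⟩) ^ (u - 1) ∣ N := by
    have hprod := prod_univ_eq k u n h0 huk heq
    have h1 : n ⟨0, h0⟩ * N = n ⟨0, h0⟩ * ((n ⟨0, h0⟩) ^ (u - 1) * WF k u n k) := by
      rw [hNsplit, hprod]
      have : (n ⟨0, h0⟩) ^ u = n ⟨0, h0⟩ * (n ⟨0, h0⟩) ^ (u - 1) := by
        conv_lhs => rw [show u = (u - 1) + 1 by omega]
        rw [pow_succ]; ring
      rw [this]; ring
    have h2 : N = (n ⟨0, h0⟩) ^ (u - 1) * WF k u n k :=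
      Nat.eq_of_mul_eq_mul_left (hpos _) h1
    exact ⟨WF k u n k, h2⟩
  have hdvdr : (n ⟨0, h0⟩) ^ (u - 1) ∣ r := by
    rw [hrdec]
    exact dvd_add (Dvd.dvd.mul_left (hdvdN.mul_left lam) r1) hdvd
  obtain ⟨f, hord, hok⟩ := lamK_lower k lam u n (by omega) h0 hu1 huk hpos heq hlt r hdvdr
  have hub : ∀ s ∈ {s | ∃ f, (lamK k lam n).IsOrdering f ∧ (lamK k lam n).cmsOK f r s},
      s ≤ r * n ⟨0, h0⟩ := by
    rintro s ⟨f', _, hok'⟩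
    exact lamK_upper k lam n h0 r s f' hok'
  have hmem : r * n ⟨0, h0⟩
      ∈ {s | ∃ f, (lamK k lam n).IsOrdering f ∧ (lamK k lam n).cmsOK f r s} := ⟨f, hord, hok⟩
  unfold MHypergraph.cmsr
  exact le_antisymm (csSup_le ⟨_, hmem⟩ hub) (le_csSup ⟨r * n ⟨0, h0⟩, hub⟩ hmem)
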